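/- arXiv:1906.02902 — 2 statements merged into one kernel-verified Lean document; each statement's English description precedes it below -/
import Mathlib

section
/- For every root γ ∈ Δ and every Weyl group element w ∈ W, the Hausdorff distance in the Dynkin diagram between supp γ and supp(wγ) is at most l(w); that is, for every α ∈ supp γ there exists β ∈ supp(wγ) with d(α,β) ≤ l(w), and for every β ∈ supp(wγ) there exists α ∈ supp γ with d(α,β) ≤ l(w). -/
/-!
A (possibly infinite) reduced crystallographic root system with a fixed system of simple
roots.  Since the simple roots `Π` are linearly independent and every root is a linear
combination of them, we may coordinatize: the span of `Π` is identified with the free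
module `ι →₀ ℚ` on the index set `ι` of simple roots, the simple root indexed by `i`
being `Finsupp.single i 1`.  The coefficients `c_α` of an element `γ = ∑_{α ∈ Π} c_α α`
are then just the values `γ i`, and `supp γ` is `γ.support`.
-/

/-- A reduced crystallographic root system (possibly infinite) together with a chosen set
of simple roots, coordinatized in the basis of simple roots.  The field `coroot α` is the
linear functional `⟨·, α∨⟩` (its values are only constrained for `α ∈ Δ`). -/
structure SimpleRootSystem (ι : Type*) where
  /-- The set of roots. -/
  Δ : Set (ι →₀ ℚ)
  /-- The coroot pairing `β ↦ ⟨β, α∨⟩`. -/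
  coroot : (ι →₀ ℚ) → ((ι →₀ ℚ) →ₗ[ℚ] ℚ)
  /-- Roots are nonzero. -/
  zero_not_mem : (0 : ι →₀ ℚ) ∉ Δ
  /-- `⟨α, α∨⟩ = 2`. -/
  pairing_self : ∀ α ∈ Δ, coroot α α = 2
  /-- Crystallographic: `⟨β, α∨⟩ ∈ ℤ`. -/
  pairing_int : ∀ α ∈ Δ, ∀ β ∈ Δ, ∃ n : ℤ, coroot α β = (n : ℚ)
  /-- The reflection `s_α(β) = β - ⟨β, α∨⟩ α` maps roots to roots. -/
  reflect_mem : ∀ α ∈ Δ, ∀ β ∈ Δ, β - coroot α β • α ∈ Δ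
  /-- Reduced: the only multiples of a root `α` that are roots are `±α`. -/
  reduced : ∀ α ∈ Δ, ∀ c : ℚ, c • α ∈ Δ → c = 1 ∨ c = -1
  /-- Every simple root is a root. -/
  simple_mem : ∀ i : ι, (Finsupp.single i 1 : ι →₀ ℚ) ∈ Δ
  /-- Every root is a linear combination of the simple roots whose coefficients are either
  all nonnegative integers or all nonpositive integers. -/
  coeff_sign : ∀ α ∈ Δ, (∀ i, ∃ n : ℕ, α i = (n : ℚ)) ∨ (∀ i, ∃ n : ℕ, α i = -(n : ℚ))

namespace SimpleRootSystem

variable {ι : Type*}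

/-- The simple root indexed by `i`. -/
noncomputable def simple (i : ι) : ι →₀ ℚ := Finsupp.single i 1

variable (R : SimpleRootSystem ι)

/-- The positive roots `Δ⁺`. -/
def posRoots : Set (ι →₀ ℚ) := {α ∈ R.Δ | ∀ i, 0 ≤ α i}

/-- The negative roots `Δ⁻`. -/
def negRoots : Set (ι →₀ ℚ) := {α ∈ R.Δ | ∀ i, α i ≤ 0}

/-- The reflection `s_α : v ↦ v - ⟨v, α∨⟩ α`, as a linear endomorphism. -/
noncomputable def reflection (α : ι →₀ ℚ) : Module.End ℚ (ι →₀ ℚ) :=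
  LinearMap.id - (R.coroot α).smulRight α

/-- The Weyl group `W`, the group generated by the simple reflections, realized as the
closure of the set of simple reflections inside the endomorphism monoid (each simple
reflection is an involution, so this closure is closed under inverses). -/
noncomputable def weylGroup : Submonoid (Module.End ℚ (ι →₀ ℚ)) :=
  Submonoid.closure {g | ∃ i : ι, g = R.reflection (simple i)}

/-- The length `l(w)`: the least `k` such that `w` is a product of `k` simple
reflections. -/
noncomputable def length (w : Module.End ℚ (ι →₀ ℚ)) : ℕ :=
  sInf {k | ∃ f : Fin k → ι,
    w = (List.ofFn fun j => R.reflection (simple (f j))).prod}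

/-- The inversion set `I(w) = Δ⁺ ∩ w(Δ⁻)`. -/
noncomputable def inversions (w : Module.End ℚ (ι →₀ ℚ)) : Set (ι →₀ ℚ) :=
  R.posRoots ∩ (⇑w '' R.negRoots)

/-- The Dynkin diagram: the graph on the (indices of the) simple roots in which two
distinct simple roots `α ≠ β` are adjacent iff `⟨α, β∨⟩ ≠ 0` (equivalently, in a root
system, `⟨β, α∨⟩ ≠ 0`; we state the symmetrized form). -/
noncomputable def dynkin : SimpleGraph ι where
  Adj i j := i ≠ j ∧
    (R.coroot (simple j) (simple i) ≠ 0 ∨ R.coroot (simple i) (simple j) ≠ 0)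
  symm := ⟨fun _ _ h => ⟨h.1.symm, h.2.symm⟩⟩
  loopless := ⟨fun _ h => h.1 rfl⟩

end SimpleRootSystem

namespace SimpleRootSystem
variable {ι : Type*} (R : SimpleRootSystem ι)

lemma reflection_apply (α β : ι →₀ ℚ) :
    R.reflection α β = β - R.coroot α β • α := rfl

lemma reflection_mem {i : ι} {β : ι →₀ ℚ} (hβ : β ∈ R.Δ) :
    R.reflection (simple i) β ∈ R.Δ :=
  R.reflect_mem _ (R.simple_mem i) β hβ

lemma reflection_reflection {i : ι} (β : ι →₀ ℚ) :
    R.reflection (simple i) (R.reflection (simple i) β) = β := by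
  have h2 : R.coroot (simple i) (simple i) = 2 := R.pairing_self _ (R.simple_mem i)
  simp only [reflection_apply, map_sub, map_smul, smul_eq_mul, h2]
  module

/-- One-step lemma: every vertex of `supp γ` is within distance 1 of `supp (s_i γ)`. -/
lemma step (i : ι) {γ : ι →₀ ℚ} (hγ : γ ∈ R.Δ) :
    ∀ a ∈ γ.support, ∃ b ∈ (R.reflection (simple i) γ).support,
      R.dynkin.edist a b ≤ 1 := by
  intro a ha
  set γ' := R.reflection (simple i) γ with hγ'def
  by_cases hb : a ∈ γ'.support
  · exact ⟨a, hb, by simp [SimpleGraph.edist_self]⟩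
  · have hγa : γ a ≠ 0 := Finsupp.mem_support_iff.mp ha
    have hγ'a : γ' a = 0 := Finsupp.notMem_support_iff.mp hb
    have hai : a = i := by
      by_contra hne
      have heq : γ' a = γ a := by
        simp [hγ'def, reflection_apply, simple, Finsupp.single_apply, Ne.symm hne]
      exact hγa (heq ▸ hγ'a)
    subst hai
    by_cases hadj : ∃ b ∈ γ'.support, R.dynkin.Adj a b
    · obtain ⟨b, hbmem, hab⟩ := hadj
      exact ⟨b, hbmem, le_of_eq (SimpleGraph.edist_eq_one_iff_adj.mpr hab)⟩
    · exfalso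
      push_neg at hadj
      have hz : R.coroot (simple a) γ' = 0 := by
        conv_lhs => rw [← Finsupp.sum_single γ']
        rw [map_finsuppSum]
        apply Finset.sum_eq_zero
        intro b hbsup
        have hba : b ≠ a := fun h => hb (h ▸ hbsup)
        have hzero : R.coroot (simple a) (simple b) = 0 := by
          by_contra hc
          exact hadj b hbsup ⟨hba.symm, Or.inr hc⟩
        have hsingle : (Finsupp.single b (γ' b) : ι →₀ ℚ) = (γ' b) • simple b := by
          rw [simple, Finsupp.smul_single, smul_eq_mul, mul_one]
        show R.coroot (simple a) (Finsupp.single b (γ' b)) = 0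
        rw [hsingle, map_smul, hzero, smul_zero]
      have hfix : R.reflection (simple a) γ' = γ' := by
        rw [reflection_apply, hz, zero_smul, sub_zero]
      have hgg : γ = γ' := by
        have h := R.reflection_reflection (i := a) γ
        rw [← hγ'def] at h
        exact (hfix.symm.trans h).symm
      exact hγa (hgg ▸ hγ'a)

/-- Product of the simple reflections indexed by a list. -/
noncomputable def rprod (L : List ι) : Module.End ℚ (ι →₀ ℚ) :=
  (L.map fun i => R.reflection (simple i)).prod

lemma rprod_cons (i : ι) (L : List ι) (γ : ι →₀ ℚ) :
    R.rprod (i :: L) γ = R.reflection (simple i) (R.rprod L γ) := by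
  rw [rprod, List.map_cons, List.prod_cons, Module.End.mul_apply]; rfl

lemma rprod_mem (L : List ι) {γ : ι →₀ ℚ} (hγ : γ ∈ R.Δ) : R.rprod L γ ∈ R.Δ := by
  induction L with
  | nil => simpa [rprod] using hγ
  | cons i L ih => rw [rprod_cons]; exact R.reflection_mem ih

lemma rprod_reverse (L : List ι) (γ : ι →₀ ℚ) :
    R.rprod L.reverse (R.rprod L γ) = γ := by
  induction L generalizing γ with
  | nil => simp [rprod]
  | cons i L ih =>
    have hrev : R.rprod (i :: L).reverse = R.rprod L.reverse * R.reflection (simple i) := by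
      rw [List.reverse_cons, rprod, List.map_append, List.prod_append]
      simp [rprod]
    rw [hrev, Module.End.mul_apply, rprod_cons, reflection_reflection]
    exact ih γ

lemma step_list (L : List ι) {γ : ι →₀ ℚ} (hγ : γ ∈ R.Δ) :
    ∀ a ∈ γ.support, ∃ b ∈ (R.rprod L γ).support,
      R.dynkin.edist a b ≤ (L.length : ℕ∞) := by
  induction L with
  | nil =>
    intro a ha
    exact ⟨a, by simpa [rprod] using ha, by simp [SimpleGraph.edist_self]⟩
  | cons i L ih =>
    intro a ha
    obtain ⟨b, hbmem, hab⟩ := ih a ha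
    obtain ⟨c, hcmem, hbc⟩ := R.step i (R.rprod_mem L hγ) b hbmem
    refine ⟨c, by rwa [rprod_cons], ?_⟩
    calc R.dynkin.edist a c ≤ R.dynkin.edist a b + R.dynkin.edist b c :=
          SimpleGraph.edist_triangle
      _ ≤ (L.length : ℕ∞) + 1 := add_le_add hab hbc
      _ = ((i :: L).length : ℕ∞) := by
          rw [List.length_cons]; push_cast; ring

end SimpleRootSystem

open SimpleRootSystem in
theorem SimpleRootSystem.dist_supp_supp_le' {ι : Type*} (R : SimpleRootSystem ι)
    (γ : ι →₀ ℚ) (hγ : γ ∈ R.Δ)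
    (w : Module.End ℚ (ι →₀ ℚ)) (hw : w ∈ R.weylGroup) :
    (∀ i ∈ γ.support, ∃ j ∈ (w γ).support, R.dynkin.edist i j ≤ (R.length w : ℕ∞)) ∧
    (∀ j ∈ (w γ).support, ∃ i ∈ γ.support, R.dynkin.edist i j ≤ (R.length w : ℕ∞)) := by
  -- The set defining `length w` is nonempty.
  have hne : {k | ∃ f : Fin k → ι,
      w = (List.ofFn fun j => R.reflection (simple (f j))).prod}.Nonempty := by
    obtain ⟨l, hl, hlprod⟩ := Submonoid.exists_list_of_mem_closure hw
    -- extract indices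
    have : ∃ L : List ι, l = L.map fun i => R.reflection (simple i) := by
      clear hlprod
      induction l with
      | nil => exact ⟨[], rfl⟩
      | cons x l ihl =>
        obtain ⟨i, hi⟩ := hl x List.mem_cons_self
        obtain ⟨L, hL⟩ := ihl fun y hy => hl y (List.mem_cons_of_mem x hy)
        exact ⟨i :: L, by rw [List.map_cons, ← hi, ← hL]⟩
    obtain ⟨L, hL⟩ := this
    refine ⟨L.length, fun j => L.get j, ?_⟩
    have key : (List.ofFn fun j => R.reflection (simple (L.get j)))
        = L.map fun i => R.reflection (simple i) := by
      apply List.ext_getElem <;> simp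
    rw [key, ← hL, hlprod]
  have hmem : ∃ f : Fin (R.length w) → ι,
      w = (List.ofFn fun j => R.reflection (simple (f j))).prod := Nat.sInf_mem hne
  obtain ⟨f, hf⟩ := hmem
  set L : List ι := List.ofFn f with hLdef
  have hwL : w = R.rprod L := by
    rw [hf]
    unfold rprod
    congr 1
    apply List.ext_getElem <;> simp [hLdef]
  have hlen : (L.length : ℕ∞) = (R.length w : ℕ∞) := by
    rw [hLdef, List.length_ofFn]
  constructor
  · intro i hi
    obtain ⟨j, hj, hij⟩ := R.step_list L hγ i hi
    exact ⟨j, by rwa [hwL], by rwa [hlen] at hij⟩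
  · intro j hj
    rw [hwL] at hj
    have hroot : R.rprod L γ ∈ R.Δ := R.rprod_mem L hγ
    obtain ⟨i, hi, hji⟩ := R.step_list L.reverse hroot j hj
    rw [R.rprod_reverse L γ] at hi
    refine ⟨i, hi, ?_⟩
    rw [SimpleGraph.edist_comm]
    rw [List.length_reverse] at hji
    rwa [hlen] at hji


open SimpleRootSystem in
/-- **Supports move slowly under the Weyl group**: for a root `γ` and a Weyl group element
`w`, the Hausdorff distance in the Dynkin diagram between `supp γ` and `supp (w γ)` is at
most `l(w)`: every vertex of one support is within (extended) graph distance `l(w)` of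
some vertex of the other support. -/
theorem SimpleRootSystem.dist_supp_supp_le {ι : Type*} (R : SimpleRootSystem ι)
    (γ : ι →₀ ℚ) (hγ : γ ∈ R.Δ)
    (w : Module.End ℚ (ι →₀ ℚ)) (hw : w ∈ R.weylGroup) :
    (∀ i ∈ γ.support, ∃ j ∈ (w γ).support, R.dynkin.edist i j ≤ (R.length w : ℕ∞)) ∧
    (∀ j ∈ (w γ).support, ∃ i ∈ γ.support, R.dynkin.edist i j ≤ (R.length w : ℕ∞)) := by
  exact R.dist_supp_supp_le' γ hγ w hw
end

section
/- If w ∈ W is X-reduced and l(w) = j, then w lies in the subgroup W(Y^(j)) generated by the simple reflections at simple roots within distance less than j from Y in the Dynkin diagram. Consequently every simple reflection occurring in any reduced expression of w is indexed by a simple root at distance less than j from Y. -/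
namespace SimpleRootSystem

variable {ι : Type*} (R : SimpleRootSystem ι)

/-- For `X ⊆ Π`, the set `Δ(X)` of roots whose support is contained in `X`. -/
def deltaX (X : Set ι) : Set (ι →₀ ℚ) := {γ ∈ R.Δ | ↑γ.support ⊆ X}

/-- `w` is `X`-reduced if its inversion set contains no root supported in `X`. -/
noncomputable def IsXReduced (X : Set ι) (w : Module.End ℚ (ι →₀ ℚ)) : Prop :=
  R.inversions w ∩ R.deltaX X = ∅

/-- `Y^(j)`: the set of simple roots at (extended) graph distance less than `j` from
`Y = Π \ X` in the Dynkin diagram. -/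
noncomputable def yNbhd (X : Set ι) (j : ℕ) : Set ι :=
  {i | ∃ y, y ∉ X ∧ R.dynkin.edist i y < (j : ℕ∞)}

/-- The subgroup (realized as a submonoid of the endomorphism monoid, as in `weylGroup`)
generated by the simple reflections `s_α` for `α` in a set `s` of simple roots. -/
noncomputable def standardParabolic (s : Set ι) : Submonoid (Module.End ℚ (ι →₀ ℚ)) :=
  Submonoid.closure {g | ∃ i ∈ s, g = R.reflection (simple i)}

end SimpleRootSystem

namespace XRedProof

open SimpleRootSystem

variable {ι : Type*} (R : SimpleRootSystem ι)

lemma refl_apply (α v : ι →₀ ℚ) :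
    R.reflection α v = v - R.coroot α v • α := by
  simp [SimpleRootSystem.reflection, LinearMap.sub_apply]

lemma pairing_simple_self (i : ι) : R.coroot (simple i) (simple i) = 2 :=
  R.pairing_self _ (R.simple_mem i)

lemma refl_mem (i : ι) {β : ι →₀ ℚ} (hβ : β ∈ R.Δ) : R.reflection (simple i) β ∈ R.Δ := by
  rw [refl_apply]; exact R.reflect_mem _ (R.simple_mem i) _ hβ

lemma refl_invol (i : ι) : R.reflection (simple i) * R.reflection (simple i) = 1 := by
  apply LinearMap.ext; intro v
  rw [Module.End.mul_apply, refl_apply, refl_apply, map_sub, map_smul,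
    pairing_simple_self, Module.End.one_apply, smul_eq_mul]
  module

lemma neg_mem {γ : ι →₀ ℚ} (hγ : γ ∈ R.Δ) : -γ ∈ R.Δ := by
  have h := R.reflect_mem γ hγ γ hγ
  rw [R.pairing_self γ hγ] at h
  convert h using 1
  module

lemma root_pos_or_neg {γ : ι →₀ ℚ} (hγ : γ ∈ R.Δ) :
    γ ∈ R.posRoots ∨ γ ∈ R.negRoots := by
  rcases R.coeff_sign γ hγ with h | h
  · exact Or.inl ⟨hγ, fun i => by obtain ⟨n, hn⟩ := h i; rw [hn]; positivity⟩
  · refine Or.inr ⟨hγ, fun i => ?_⟩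
    obtain ⟨n, hn⟩ := h i; rw [hn]; simp

lemma not_pos_and_neg {γ : ι →₀ ℚ} (h1 : γ ∈ R.posRoots) (h2 : γ ∈ R.negRoots) : False := by
  have : γ = 0 := Finsupp.ext fun m => le_antisymm (h2.2 m) (h1.2 m)
  exact R.zero_not_mem (this ▸ h1.1)

lemma simple_pos (i : ι) : simple i ∈ R.posRoots := by
  classical
  refine ⟨R.simple_mem i, fun m => ?_⟩
  unfold SimpleRootSystem.simple
  rw [Finsupp.single_apply]
  split <;> norm_num

lemma refl_simple_self (i : ι) : R.reflection (simple i) (simple i) = -simple i := by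
  rw [refl_apply, pairing_simple_self]
  module

lemma eq_simple_of_pos_refl_neg {γ : ι →₀ ℚ} {i : ι} (hγ : γ ∈ R.posRoots)
    (h : R.reflection (simple i) γ ∈ R.negRoots) : γ = simple i := by
  classical
  have hcoords : ∀ m, m ≠ i → γ m = 0 := by
    intro m hmi
    refine le_antisymm ?_ (hγ.2 m)
    have h2 := h.2 m
    rw [refl_apply] at h2
    simpa [SimpleRootSystem.simple, Finsupp.single_apply, Ne.symm hmi] using h2
  have hγeq : γ = γ i • simple i := by
    apply Finsupp.ext; intro m
    by_cases hm : m = i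
    · subst hm; simp [SimpleRootSystem.simple, Finsupp.single_apply]
    · simp [SimpleRootSystem.simple, Finsupp.single_apply, Ne.symm hm, hcoords m hm]
  rcases R.reduced (simple i) (R.simple_mem i) (γ i) (hγeq ▸ hγ.1) with h1 | h1
  · rw [hγeq, h1, one_smul]
  · exfalso
    have := hγ.2 i
    rw [h1] at this
    norm_num at this

lemma neg_of_pos {γ : ι →₀ ℚ} (h : γ ∈ R.posRoots) : -γ ∈ R.negRoots :=
  ⟨neg_mem R h.1, fun m => by simpa using h.2 m⟩


noncomputable def pR (L : List ι) : Module.End ℚ (ι →₀ ℚ) :=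
  (L.map fun i => R.reflection (simple i)).prod

lemma pR_nil : pR R ([] : List ι) = 1 := rfl

lemma pR_cons (a : ι) (M : List ι) :
    pR R (a :: M) = R.reflection (simple a) * pR R M := by simp [pR]

lemma pR_append (L M : List ι) : pR R (L ++ M) = pR R L * pR R M := by simp [pR]

lemma pR_mem (L : List ι) {γ : ι →₀ ℚ} (hγ : γ ∈ R.Δ) : pR R L γ ∈ R.Δ := by
  induction L with
  | nil => simpa [pR] using hγ
  | cons a M ih =>
    rw [pR_cons, Module.End.mul_apply]
    exact refl_mem R a ih

lemma pR_rev_mul (L : List ι) : pR R L.reverse * pR R L = 1 := by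
  induction L with
  | nil => simp [pR]
  | cons a M ih =>
    rw [List.reverse_cons, pR_append, pR_cons, pR_cons, pR_nil, mul_one]
    calc pR R M.reverse * R.reflection (simple a) * (R.reflection (simple a) * pR R M)
        = pR R M.reverse * (R.reflection (simple a) * R.reflection (simple a)) * pR R M := by
          simp [mul_assoc]
      _ = 1 := by rw [refl_invol, mul_one, ih]

lemma pR_mul_rev (L : List ι) : pR R L * pR R L.reverse = 1 := by
  have := pR_rev_mul R L.reverse
  rwa [List.reverse_reverse] at this

lemma pR_rev_apply_eq (L : List ι) (v : ι →₀ ℚ) :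
    pR R L.reverse (pR R L v) = v := by
  rw [← Module.End.mul_apply, pR_rev_mul, Module.End.one_apply]

lemma pR_apply_rev_eq (L : List ι) (v : ι →₀ ℚ) :
    pR R L (pR R L.reverse v) = v := by
  rw [← Module.End.mul_apply, pR_mul_rev, Module.End.one_apply]

/-- Uniqueness of the coroot functional of a simple root. -/
lemma coroot_unique (i : ι) (φ : (ι →₀ ℚ) →ₗ[ℚ] ℚ) (h2 : φ (simple i) = 2)
    (hrefl : ∀ β ∈ R.Δ, β - φ β • simple i ∈ R.Δ) :
    ∀ β ∈ R.Δ, φ β = R.coroot (simple i) β := by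
  classical
  set c : (ι →₀ ℚ) →ₗ[ℚ] ℚ := R.coroot (simple i) with hc
  have hcα : c (simple i) = 2 := pairing_simple_self R i
  -- going up
  have hstepUp : ∀ x ∈ R.Δ, x + (φ x - c x) • simple i ∈ R.Δ := by
    intro x hx
    have h1 : x - φ x • simple i ∈ R.Δ := hrefl x hx
    have h2' := R.reflect_mem _ (R.simple_mem i) _ h1
    have hcc : R.coroot (Finsupp.single i 1) (x - φ x • simple i) = c x - φ x * 2 := by
      rw [map_sub, map_smul, smul_eq_mul]
      show c x - φ x * c (simple i) = c x - φ x * 2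
      rw [hcα]
    rw [hcc] at h2'
    convert h2' using 1
    show x + (φ x - c x) • simple i
      = x - φ x • simple i - (c x - φ x * 2) • simple i
    module
  have hstepDown : ∀ x ∈ R.Δ, x - (φ x - c x) • simple i ∈ R.Δ := by
    intro x hx
    have h1 : x - c x • simple i ∈ R.Δ := by
      have := R.reflect_mem _ (R.simple_mem i) _ hx
      exact this
    have h2' := hrefl _ h1
    have hφφ : φ (x - c x • simple i) = φ x - c x * 2 := by
      rw [map_sub, map_smul, smul_eq_mul, h2]
    rw [hφφ] at h2'
    convert h2' using 1
    show x - (φ x - c x) • simple i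
      = x - c x • simple i - (φ x - c x * 2) • simple i
    module
  -- θ is invariant along the orbit
  have htheta : ∀ (x : ι →₀ ℚ) (t : ℚ),
      φ (x + t • simple i) - c (x + t • simple i) = φ x - c x := by
    intro x t
    rw [map_add, map_add, map_smul, map_smul, smul_eq_mul, smul_eq_mul, h2, hcα]
    ring
  have horbit : ∀ n : ℕ, ∀ x ∈ R.Δ,
      x + ((n : ℚ) * (φ x - c x)) • simple i ∈ R.Δ ∧
      x - ((n : ℚ) * (φ x - c x)) • simple i ∈ R.Δ := by
    intro n
    induction n with
    | zero => intro x hx; refine ⟨?_, ?_⟩ <;> simpa using hx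
    | succ n ih =>
      intro x hx
      obtain ⟨hup, hdown⟩ := ih x hx
      constructor
      · have := hstepUp _ hup
        rw [htheta] at this
        convert this using 1
        push_cast
        module
      · have := hstepDown _ hdown
        have heq : φ (x - ((n : ℚ) * (φ x - c x)) • simple i)
            - c (x - ((n : ℚ) * (φ x - c x)) • simple i) = φ x - c x := by
          have h' := htheta x (-((n : ℚ) * (φ x - c x)))
          rw [neg_smul, ← sub_eq_add_neg] at h'
          exact h'
        rw [heq] at this
        convert this using 1
        push_cast
        module
  -- main argument
  intro β hβ
  by_contra hne
  have hθ : φ β - c β ≠ 0 := sub_ne_zero.mpr hne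
  set t : ℚ := φ β - c β with ht
  have hcoord : ∀ m, m ≠ i → β m = 0 := by
    intro m hmi
    by_contra hm0
    obtain ⟨n, hn⟩ := exists_nat_gt (|β i| / |t|)
    have htpos : 0 < |t| := abs_pos.mpr hθ
    have hbig : |β i| < (n : ℚ) * |t| := by
      rw [div_lt_iff₀ htpos] at hn
      linarith [hn]
    obtain ⟨hup, hdown⟩ := horbit n β hβ
    -- coordinates
    have hsimm : (simple i : ι →₀ ℚ) m = 0 := by
      unfold SimpleRootSystem.simple
      rw [Finsupp.single_apply, if_neg (Ne.symm hmi)]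
    have hsimi : (simple i : ι →₀ ℚ) i = 1 := by
      unfold SimpleRootSystem.simple
      rw [Finsupp.single_apply, if_pos rfl]
    have hupm : (β + ((n : ℚ) * t) • simple i) m = β m := by
      simp [hsimm]
    have hdownm : (β - ((n : ℚ) * t) • simple i) m = β m := by
      simp [hsimm]
    have hupi : (β + ((n : ℚ) * t) • simple i) i = β i + (n : ℚ) * t := by
      simp [hsimi]
    have hdowni : (β - ((n : ℚ) * t) • simple i) i = β i - (n : ℚ) * t := by
      simp [hsimi]
    -- one of the two has i-coordinate > 0, the other < 0
    have hu : |β i| < |(n : ℚ) * t| := by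
      rw [abs_mul, Nat.abs_cast]; exact hbig
    have hsign : (0 < β i + (n : ℚ) * t ∧ β i - (n : ℚ) * t < 0) ∨
        (β i + (n : ℚ) * t < 0 ∧ 0 < β i - (n : ℚ) * t) := by
      obtain ⟨ha, hb⟩ := abs_lt.mp hu
      rcases lt_trichotomy ((n : ℚ) * t) 0 with h | h | h
      · rw [abs_of_neg h] at ha hb
        exact Or.inr ⟨by linarith, by linarith⟩
      · exfalso; rw [h, abs_zero] at hu; exact absurd hu (not_lt.mpr (abs_nonneg _))
      · rw [abs_of_pos h] at ha hb
        exact Or.inl ⟨by linarith, by linarith⟩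
    -- contradiction with sign coherence of roots
    have key : ∀ {z : ι →₀ ℚ}, z ∈ R.Δ → z m = β m → z i < 0 → False := by
      intro z hz hzm hzi
      rcases root_pos_or_neg R hz with hp | hn'
      · exact absurd (hp.2 i) (not_le.mpr hzi)
      · have := hn'.2 m
        rw [hzm] at this
        -- then β m ≤ 0; also need the positive-side contradiction separately
        exact hm0 (le_antisymm this (by
          -- 0 ≤ β m from the element with positive i-coordinate
          rcases hsign with ⟨h1, h2⟩ | ⟨h1, h2⟩
          · rcases root_pos_or_neg R hup with hp2 | hn2
            · have := hp2.2 m; rwa [hupm] at this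
            · exact absurd (hn2.2 i) (by rw [hupi]; exact not_le.mpr h1)
          · rcases root_pos_or_neg R hdown with hp2 | hn2
            · have := hp2.2 m; rwa [hdownm] at this
            · exact absurd (hn2.2 i) (by rw [hdowni]; exact not_le.mpr h2)))
    rcases hsign with ⟨h1, h2⟩ | ⟨h1, h2⟩
    · exact key hdown hdownm (by rw [hdowni]; exact h2)
    · exact key hup hupm (by rw [hupi]; exact h1)
  -- hence β is a multiple of the simple root
  have hβeq : β = β i • simple i := by
    classical
    apply Finsupp.ext; intro m
    by_cases hm : m = i
    · subst hm; simp [SimpleRootSystem.simple, Finsupp.single_apply]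
    · simp [SimpleRootSystem.simple, Finsupp.single_apply, Ne.symm hm, hcoord m hm]
  have hred := R.reduced (simple i) (R.simple_mem i) (β i) (hβeq ▸ hβ)
  apply hθ
  rw [ht]
  have : φ β - c β = β i * (φ (simple i) - c (simple i)) := by
    conv_lhs => rw [hβeq]
    rw [map_smul, map_smul, smul_eq_mul, smul_eq_mul]
    ring
  rw [this, h2, hcα]
  ring

/-- Conjugation: if a Weyl element maps a simple root to a simple root, it conjugates
the corresponding simple reflections into each other. -/
lemma conj_eq (L : List ι) (i j : ι) (h : pR R L (simple i) = simple j) :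
    pR R L * R.reflection (simple i) = R.reflection (simple j) * pR R L := by
  set φ : (ι →₀ ℚ) →ₗ[ℚ] ℚ := (R.coroot (simple j)).comp (pR R L) with hφ
  have h2 : φ (simple i) = 2 := by
    rw [hφ, LinearMap.comp_apply, h, pairing_simple_self]
  have hrevj : pR R L.reverse (simple j) = simple i := by
    rw [← h, pR_rev_apply_eq]
  have hrefl : ∀ β ∈ R.Δ, β - φ β • simple i ∈ R.Δ := by
    intro β hβ
    have hmem : pR R L.reverse (R.reflection (simple j) (pR R L β)) ∈ R.Δ :=
      pR_mem R _ (refl_mem R _ (pR_mem R _ hβ))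
    have heq : pR R L.reverse (R.reflection (simple j) (pR R L β))
        = β - φ β • simple i := by
      rw [refl_apply, map_sub, map_smul, hrevj, pR_rev_apply_eq]
      rfl
    rwa [heq] at hmem
  have huniq := coroot_unique R i φ h2 hrefl
  -- prove equality of endomorphisms on the basis
  apply Finsupp.lhom_ext'
  intro a
  apply LinearMap.ext_ring
  rw [LinearMap.comp_apply, LinearMap.comp_apply]
  show (pR R L * R.reflection (simple i)) (Finsupp.single a 1)
    = (R.reflection (simple j) * pR R L) (Finsupp.single a 1)
  have ha : (Finsupp.single a 1 : ι →₀ ℚ) = simple a := rfl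
  rw [Module.End.mul_apply, Module.End.mul_apply, ha, refl_apply, refl_apply,
    map_sub, map_smul, h]
  have : R.coroot (simple i) (simple a) = R.coroot (simple j) (pR R L (simple a)) :=
    (huniq (simple a) (R.simple_mem a)).symm
  rw [this]

/-- If a simple root is sent to a negative root, somewhere along the word it passes
from positive to negative, and at that point it is the corresponding simple root. -/
lemma chain (L : List ι) (i : ι) (h : pR R L (simple i) ∈ R.negRoots) :
    ∃ L₁ p L₂, L = L₁ ++ p :: L₂ ∧ pR R L₂ (simple i) = simple p := by
  induction L with
  | nil =>
    exfalso
    refine not_pos_and_neg R (simple_pos R i) ?_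
    simpa [pR] using h
  | cons a M ih =>
    have hx : pR R M (simple i) ∈ R.Δ := pR_mem R M (R.simple_mem i)
    have hcons : pR R (a :: M) (simple i)
        = R.reflection (simple a) (pR R M (simple i)) := by
      rw [pR_cons, Module.End.mul_apply]
    rcases root_pos_or_neg R hx with hp | hn
    · refine ⟨[], a, M, rfl, ?_⟩
      exact eq_simple_of_pos_refl_neg R hp (by rwa [hcons] at h)
    · obtain ⟨L₁, p, L₂, rfl, hh⟩ := ih hn
      exact ⟨a :: L₁, p, L₂, rfl, hh⟩

lemma length_le (M : List ι) : R.length (pR R M) ≤ M.length := by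
  apply Nat.sInf_le
  refine ⟨fun k => M.get k, ?_⟩
  have hh := List.map_ofFn (f := M.get) (g := fun i => R.reflection (simple i))
  rw [List.ofFn_get] at hh
  exact hh ▸ rfl

lemma lengthSet_nonempty (M : List ι) :
    {k | ∃ f : Fin k → ι,
      pR R M = (List.ofFn fun j => R.reflection (simple (f j))).prod}.Nonempty := by
  refine ⟨M.length, fun k => M.get k, ?_⟩
  have hh := List.map_ofFn (f := M.get) (g := fun i => R.reflection (simple i))
  rw [List.ofFn_get] at hh
  exact hh ▸ rfl

lemma pR_ofFn {n : ℕ} (f : Fin n → ι) :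
    pR R (List.ofFn f) = (List.ofFn fun j => R.reflection (simple (f j))).prod := by
  rw [pR, List.map_ofFn]
  rfl

lemma pR_eq_of_eq {L M : List ι} (h : pR R L = pR R M) :
    pR R L.reverse = pR R M.reverse := by
  have h1 : pR R L.reverse * (pR R M * pR R M.reverse) = pR R L.reverse := by
    rw [pR_mul_rev, mul_one]
  calc pR R L.reverse = pR R L.reverse * (pR R M * pR R M.reverse) := h1.symm
    _ = (pR R L.reverse * pR R L) * pR R M.reverse := by rw [← h, mul_assoc]
    _ = pR R M.reverse := by rw [pR_rev_mul, one_mul]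

lemma length_reverse_le (L : List ι) :
    R.length (pR R L.reverse) ≤ R.length (pR R L) := by
  have hmem := Nat.sInf_mem (lengthSet_nonempty R L)
  obtain ⟨f, hf⟩ := hmem
  have h1 : pR R L = pR R (List.ofFn f) := by rw [pR_ofFn]; exact hf
  have h2 : pR R L.reverse = pR R (List.ofFn f).reverse := pR_eq_of_eq R h1
  calc R.length (pR R L.reverse) = R.length (pR R (List.ofFn f).reverse) := by rw [h2]
    _ ≤ (List.ofFn f).reverse.length := length_le R _
    _ = R.length (pR R L) := by rw [List.length_reverse, List.length_ofFn]; rfl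

lemma length_reverse (L : List ι) :
    R.length (pR R L.reverse) = R.length (pR R L) := by
  refine le_antisymm (length_reverse_le R L) ?_
  have := length_reverse_le R L.reverse
  rwa [List.reverse_reverse] at this

lemma beta_pos (A B : List ι) (i : ι)
    (hmin : R.length (pR R (A ++ i :: B)) = (A ++ i :: B).length) :
    pR R A (simple i) ∈ R.posRoots := by
  have hβΔ : pR R A (simple i) ∈ R.Δ := pR_mem R A (R.simple_mem i)
  rcases root_pos_or_neg R hβΔ with hp | hn
  · exact hp
  exfalso
  obtain ⟨L₁, p, L₂, rfl, hh⟩ := chain R A i hn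
  have hconj := conj_eq R L₂ i p hh
  have h2 : R.reflection (simple p) * (pR R L₂ * (R.reflection (simple i) * pR R B))
      = pR R L₂ * pR R B := by
    calc R.reflection (simple p) * (pR R L₂ * (R.reflection (simple i) * pR R B))
        = R.reflection (simple p) * ((pR R L₂ * R.reflection (simple i)) * pR R B) := by
          rw [mul_assoc]
      _ = R.reflection (simple p) * ((R.reflection (simple p) * pR R L₂) * pR R B) := by
          rw [hconj]
      _ = (R.reflection (simple p) * R.reflection (simple p)) * (pR R L₂ * pR R B) := by
          simp only [mul_assoc]
      _ = pR R L₂ * pR R B := by rw [refl_invol, one_mul]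
  have heq : pR R ((L₁ ++ p :: L₂) ++ i :: B) = pR R (L₁ ++ (L₂ ++ B)) := by
    simp only [pR_append, pR_cons, mul_assoc]
    rw [h2]
  have hle : R.length (pR R ((L₁ ++ p :: L₂) ++ i :: B))
      ≤ L₁.length + (L₂.length + B.length) := by
    rw [heq]
    simpa [List.length_append] using length_le R (L₁ ++ (L₂ ++ B))
  rw [hmin] at hle
  simp only [List.length_append, List.length_cons] at hle
  omega

lemma mem_inversions (A B : List ι) (i : ι)
    (hmin : R.length (pR R (A ++ i :: B)) = (A ++ i :: B).length) :
    pR R A (simple i) ∈ R.inversions (pR R (A ++ i :: B)) := by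
  have hrevlist : (A ++ i :: B).reverse = B.reverse ++ i :: A.reverse := by
    simp
  have hminrev : R.length (pR R (B.reverse ++ i :: A.reverse))
      = (B.reverse ++ i :: A.reverse).length := by
    rw [← hrevlist, length_reverse, hmin, List.length_reverse]
  have hpos := beta_pos R B.reverse A.reverse i hminrev
  have hcalc : pR R (A ++ i :: B) (-(pR R B.reverse (simple i))) = pR R A (simple i) := by
    rw [pR_append, pR_cons, Module.End.mul_apply, Module.End.mul_apply, map_neg,
      pR_apply_rev_eq, map_neg, refl_simple_self, neg_neg]
  exact Set.mem_inter (beta_pos R A B i hmin)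
    ⟨-(pR R B.reverse (simple i)), neg_of_pos R hpos, hcalc⟩

lemma supp_dist (L : List ι) (i : ι) :
    ∀ m ∈ (pR R L (simple i)).support, R.dynkin.edist m i ≤ (L.length : ℕ∞) := by
  classical
  induction L with
  | nil =>
    intro m hm
    have hmi : m = i := by
      rw [show pR R [] (simple i) = simple i from rfl] at hm
      unfold SimpleRootSystem.simple at hm
      rw [Finsupp.support_single_ne_zero i one_ne_zero, Finset.mem_singleton] at hm
      exact hm
    subst hmi
    simp [SimpleGraph.edist_self]
  | cons a M ih =>
    intro m hm
    have hcons : pR R (a :: M) (simple i)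
        = pR R M (simple i) - R.coroot (simple a) (pR R M (simple i)) • simple a := by
      rw [pR_cons, Module.End.mul_apply, refl_apply]
    set x := pR R M (simple i) with hx
    have hstep : (M.length : ℕ∞) ≤ ((a :: M).length : ℕ∞) := by
      rw [List.length_cons]; exact_mod_cast Nat.le_succ _
    by_cases hma : m = a
    · subst hma
      by_cases hax : m ∈ x.support
      · exact le_trans (ih m hax) hstep
      · have hxa : x m = 0 := Finsupp.notMem_support_iff.mp hax
        have hc : R.coroot (simple m) x ≠ 0 := by
          intro h0
          apply Finsupp.mem_support_iff.mp hm
          rw [hcons, h0]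
          simp [hxa]
        have hsum : R.coroot (simple m) x
            = ∑ m' ∈ x.support, x m' * R.coroot (simple m) (simple m') := by
          conv_lhs => rw [← Finsupp.sum_single x]
          rw [map_finsuppSum, Finsupp.sum]
          refine Finset.sum_congr rfl fun m' _ => ?_
          rw [show Finsupp.single m' (x m') = x m' • (simple m' : ι →₀ ℚ) from
            (by unfold SimpleRootSystem.simple; rw [Finsupp.smul_single', mul_one] :
              x m' • (simple m' : ι →₀ ℚ) = Finsupp.single m' (x m')).symm]
          rw [map_smul, smul_eq_mul]
        obtain ⟨m', hm', hne0⟩ :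
            ∃ m' ∈ x.support, x m' * R.coroot (simple m) (simple m') ≠ 0 := by
          by_contra hforall
          push_neg at hforall
          exact hc (hsum.trans (Finset.sum_eq_zero hforall))
        have hpair : R.coroot (simple m) (simple m') ≠ 0 :=
          fun h => hne0 (by rw [h, mul_zero])
        have hm'm : m' ≠ m := fun he => hax (he ▸ hm')
        have hadj : R.dynkin.Adj m m' := ⟨Ne.symm hm'm, Or.inr hpair⟩
        calc R.dynkin.edist m i ≤ R.dynkin.edist m m' + R.dynkin.edist m' i :=
              SimpleGraph.edist_triangle
          _ ≤ 1 + (M.length : ℕ∞) := by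
              refine add_le_add ?_ (ih m' hm')
              refine le_trans (SimpleGraph.edist_le hadj.toWalk) ?_
              simp [SimpleGraph.Adj.toWalk]
          _ = ((m :: M).length : ℕ∞) := by
              rw [List.length_cons, add_comm]
              push_cast
              rfl
    · have hxm : m ∈ x.support := by
        rw [Finsupp.mem_support_iff] at hm ⊢
        intro h0
        apply hm
        rw [hcons]
        have hsm : (simple a : ι →₀ ℚ) m = 0 := by
          unfold SimpleRootSystem.simple
          rw [Finsupp.single_apply, if_neg (Ne.symm hma)]
        rw [Finsupp.sub_apply, Finsupp.smul_apply, hsm, h0]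
        simp
      exact le_trans (ih m hxm) hstep

lemma exists_list {w : Module.End ℚ (ι →₀ ℚ)} (hw : w ∈ R.weylGroup) :
    ∃ L : List ι, pR R L = w := by
  have hw' : w ∈ Submonoid.closure {g | ∃ i : ι, g = R.reflection (simple i)} := hw
  induction hw' using Submonoid.closure_induction with
  | mem x hx => obtain ⟨i, rfl⟩ := hx; exact ⟨[i], by simp [pR]⟩
  | one => exact ⟨[], rfl⟩
  | mul x y hx hy ihx ihy =>
    obtain ⟨L, hL⟩ := ihx hx
    obtain ⟨M, hM⟩ := ihy hy
    exact ⟨L ++ M, by rw [pR_append, hL, hM]⟩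

end XRedProof

open SimpleRootSystem in
/-- **`X`-reduced elements are supported near `Y`**: if `w ∈ W` is `X`-reduced of length
`j`, then `w` lies in the subgroup `W(Y^(j))` generated by the simple reflections at
simple roots within distance less than `j` from `Y = Π \ X`; consequently every simple
reflection occurring in any reduced expression of `w` is indexed by a simple root at
distance less than `j` from `Y`. -/
theorem SimpleRootSystem.xReduced_mem_parabolic {ι : Type*} (R : SimpleRootSystem ι)
    (X : Set ι) (w : Module.End ℚ (ι →₀ ℚ)) (hw : w ∈ R.weylGroup)
    (hred : R.IsXReduced X w) (j : ℕ) (hlen : R.length w = j) :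
    w ∈ R.standardParabolic (R.yNbhd X j) ∧
      ∀ f : Fin j → ι,
        w = (List.ofFn fun k => R.reflection (simple (f k))).prod →
          ∀ k : Fin j, f k ∈ R.yNbhd X j := by
  classical
  have part2 : ∀ f : Fin j → ι,
      w = (List.ofFn fun k => R.reflection (simple (f k))).prod →
      ∀ k : Fin j, f k ∈ R.yNbhd X j := by
    intro f hf k
    set L := List.ofFn f with hL
    have hwL : w = XRedProof.pR R L := by rw [hf, XRedProof.pR_ofFn]
    have hlenL : L.length = j := by rw [hL, List.length_ofFn]
    have hkj : (k : ℕ) < L.length := by rw [hlenL]; exact k.isLt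
    have hgetk : L[(k : ℕ)] = f k := by
      simp [hL]
    have hdecomp : L = L.take k ++ f k :: L.drop (k + 1) := by
      conv_lhs => rw [← List.take_append_drop (k : ℕ) L]
      rw [List.drop_eq_getElem_cons hkj, hgetk]
    have hmin : R.length (XRedProof.pR R (L.take k ++ f k :: L.drop (k + 1)))
        = (L.take k ++ f k :: L.drop (k + 1)).length := by
      rw [← hdecomp, ← hwL, hlen, hlenL]
    have hinv := XRedProof.mem_inversions R (L.take k) (L.drop (k + 1)) (f k) hmin
    rw [← hdecomp, ← hwL] at hinv
    set β := XRedProof.pR R (L.take k) (simple (f k)) with hβ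
    have hβΔ : β ∈ R.Δ := XRedProof.pR_mem R _ (R.simple_mem (f k))
    have hred' : R.inversions w ∩ R.deltaX X = ∅ := hred
    have hnotX : ¬ ((β.support : Set ι) ⊆ X) := by
      intro hsub
      exact Set.eq_empty_iff_forall_notMem.mp hred' β ⟨hinv, hβΔ, hsub⟩
    obtain ⟨y, hy, hyX⟩ := Set.not_subset.mp hnotX
    have hyd : R.dynkin.edist y (f k) ≤ ((L.take k).length : ℕ∞) :=
      XRedProof.supp_dist R (L.take k) (f k) y (by exact_mod_cast hy)
    have htk : (L.take k).length = (k : ℕ) := by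
      rw [List.length_take]
      omega
    have hlt : R.dynkin.edist (f k) y < (j : ℕ∞) := by
      rw [SimpleGraph.edist_comm]
      refine lt_of_le_of_lt hyd ?_
      rw [htk]
      exact_mod_cast k.isLt
    exact ⟨y, hyX, hlt⟩
  refine ⟨?_, part2⟩
  obtain ⟨L0, hL0⟩ := XRedProof.exists_list R hw
  have hne : {k | ∃ f : Fin k → ι,
      w = (List.ofFn fun j => R.reflection (simple (f j))).prod}.Nonempty := by
    have := XRedProof.lengthSet_nonempty R L0
    rwa [hL0] at this
  have hmem : R.length w ∈ {k | ∃ f : Fin k → ι,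
      w = (List.ofFn fun j => R.reflection (simple (f j))).prod} := Nat.sInf_mem hne
  rw [hlen] at hmem
  obtain ⟨f₀, hf₀⟩ := hmem
  have hall := part2 f₀ hf₀
  rw [hf₀]
  apply Submonoid.list_prod_mem
  intro g hg
  rw [List.mem_ofFn] at hg
  obtain ⟨k, hk⟩ := hg
  rw [← hk]
  exact Submonoid.subset_closure ⟨f₀ k, hall k, rfl⟩
end
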